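/- arXiv:1808.05400 — 3 statements merged into one kernel-verified Lean document; each statement's English description precedes it below -/
import Mathlib

section
/- An infinite word u over a finite alphabet is eventually periodic if and only if its factor complexity function p_u(n) (the number of distinct factors of length n) is bounded. -/
/-- The set of factors of length `n` of the infinite word `u`. -/
def wordFactors {A : Type*} (u : ℕ → A) (n : ℕ) : Set (List A) :=
  {w | ∃ i, w = List.ofFn (fun k : Fin n => u (i + k))}

/-- The factor complexity `p_u(n)`: the number of distinct factors of length `n`. -/
noncomputable def wordComplexity {A : Type*} (u : ℕ → A) (n : ℕ) : ℕ :=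
  (wordFactors u n).ncard

/-- `u` is eventually periodic. -/
def EventuallyPeriodic {A : Type*} (u : ℕ → A) : Prop :=
  ∃ N T, 1 ≤ T ∧ ∀ i, N ≤ i → u (i + T) = u i

section Aux

variable {A : Type*} (u : ℕ → A)

/-- The length-`n` window of `u` starting at `i`. -/
def uWindow (n i : ℕ) : List A := List.ofFn (fun k : Fin n => u (i + k))

lemma uWindow_mem (n i : ℕ) : uWindow u n i ∈ wordFactors u n := ⟨i, rfl⟩

lemma wordFactors_eq_range (n : ℕ) : wordFactors u n = Set.range (uWindow u n) := by
  ext w; constructor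
  · rintro ⟨i, rfl⟩; exact ⟨i, rfl⟩
  · rintro ⟨i, rfl⟩; exact ⟨i, rfl⟩

lemma wordFactors_finite [Finite A] (n : ℕ) : (wordFactors u n).Finite := by
  have hsub : wordFactors u n ⊆ (fun g : Fin n → A => List.ofFn g) '' Set.univ := by
    rintro w ⟨i, rfl⟩; exact ⟨_, trivial, rfl⟩
  exact (Set.finite_univ.image _).subset hsub

lemma take_uWindow (n i : ℕ) : (uWindow u (n + 1) i).take n = uWindow u n i := by
  apply List.ext_getElem
  · simp [uWindow]
  · intro j h1 h2
    simp only [uWindow, List.getElem_take, List.getElem_ofFn]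

end Aux

/-- An infinite word over a finite alphabet is eventually periodic iff its factor
complexity is bounded. -/
theorem eventually_periodic_iff_bounded_complexity {A : Type*} [Finite A] (u : ℕ → A) :
    EventuallyPeriodic u ↔ ∃ C, ∀ n, wordComplexity u n ≤ C := by
  constructor
  · rintro ⟨N, T, hT, hper⟩
    refine ⟨N + T, fun n => ?_⟩
    -- every factor occurs at some position < N + T
    have key : ∀ i, ∃ j < N + T, uWindow u n i = uWindow u n j := by
      intro i
      induction i using Nat.strong_induction_on with
      | _ i ih =>
        by_cases hi : i < N + T
        · exact ⟨i, hi, rfl⟩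
        · have hiT : T ≤ i := by omega
          obtain ⟨j, hj, hw⟩ := ih (i - T) (by omega)
          refine ⟨j, hj, ?_⟩
          rw [← hw]
          unfold uWindow
          congr 1
          funext k
          have : i - T + ↑k + T = i + ↑k := by omega
          rw [← this]
          exact hper _ (by omega)
    have hsub : wordFactors u n ⊆ uWindow u n '' (Set.Iio (N + T)) := by
      rintro w ⟨i, rfl⟩
      obtain ⟨j, hj, hw⟩ := key i
      exact ⟨j, hj, hw.symm⟩
    calc wordComplexity u n ≤ (uWindow u n '' (Set.Iio (N + T))).ncard :=
          Set.ncard_le_ncard hsub ((Set.finite_Iio _).image _)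
      _ ≤ (Set.Iio (N + T)).ncard := Set.ncard_image_le (Set.finite_Iio _)
      _ = N + T := by rw [← Finset.coe_Iio, Set.ncard_coe_finset, Nat.card_Iio]
  · rintro ⟨C, hC⟩
    -- find n with p(n+1) ≤ p(n)
    have hex : ∃ n, wordComplexity u (n + 1) ≤ wordComplexity u n := by
      by_contra h
      push_neg at h
      have hgrow : ∀ n, n ≤ wordComplexity u n := by
        intro n
        induction n with
        | zero => exact Nat.zero_le _
        | succ n ih => exact Nat.lt_of_le_of_lt ih (h n)
      exact absurd (hC (C + 1)) (by have := hgrow (C + 1); omega)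
    obtain ⟨n, hn⟩ := hex
    -- injectivity of take n on factors(n+1)
    have hinj : ∀ v ∈ wordFactors u (n + 1), ∀ w ∈ wordFactors u (n + 1),
        v.take n = w.take n → v = w := by
      intro v hv w hw hvw
      refine Set.inj_on_of_surj_on_of_ncard_le (s := wordFactors u (n+1))
        (t := wordFactors u n) (fun a _ => a.take n) ?_ ?_ hn hv hw hvw
        (wordFactors_finite u (n + 1))
      · rintro a ⟨i, rfl⟩
        exact ⟨i, take_uWindow u n i⟩
      · rintro b ⟨i, rfl⟩
        exact ⟨uWindow u (n + 1) i, uWindow_mem u (n + 1) i, take_uWindow u n i⟩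
    -- state sequence
    set St : ℕ → (Fin (n + 1) → A) := fun i k => u (i + k) with hSt
    have hdet : ∀ i j, St i = St j → St (i + 1) = St (j + 1) := by
      intro i j hij
      have hwin : uWindow u (n + 1) (i + 1) = uWindow u (n + 1) (j + 1) := by
        apply hinj _ (uWindow_mem u _ _) _ (uWindow_mem u _ _)
        rw [take_uWindow, take_uWindow]
        unfold uWindow
        congr 1
        funext k
        have h1 : i + 1 + (k : ℕ) = i + (k.succ : ℕ) := by simp [Fin.val_succ]; omega
        have h2 : j + 1 + (k : ℕ) = j + (k.succ : ℕ) := by simp [Fin.val_succ]; omega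
        rw [h1, h2]
        exact congrFun hij k.succ
      have := List.ofFn_injective hwin
      funext k
      exact congrFun this k
    have hdet' : ∀ k i j, St i = St j → St (i + k) = St (j + k) := by
      intro k
      induction k with
      | zero => intro i j h; exact h
      | succ k ih =>
        intro i j h
        have := hdet (i + k) (j + k) (ih i j h)
        simpa only [Nat.add_succ] using this
    -- pigeonhole on states
    obtain ⟨i, j, hne, heq⟩ : ∃ i j, i ≠ j ∧ St i = St j := by
      have : ¬ Function.Injective St := by
        intro h
        exact (Finite.of_injective St h).false
      simp only [Function.Injective, not_forall] at this
      obtain ⟨i, j, h1, h2⟩ := this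
      exact ⟨i, j, h2, h1⟩
    -- wlog i < j
    rcases Nat.lt_or_ge i j with hij | hij
    · refine ⟨i, j - i, by omega, fun m hm => ?_⟩
      have h1 : St (i + (m - i)) = St (j + (m - i)) := hdet' (m - i) i j heq
      have e1 : i + (m - i) = m := by omega
      have e2 : j + (m - i) = m + (j - i) := by omega
      rw [e1, e2] at h1
      have := congrFun h1 (0 : Fin (n + 1))
      simpa [hSt] using this.symm
    · have hij' : j < i := by omega
      refine ⟨j, i - j, by omega, fun m hm => ?_⟩
      have h1 : St (j + (m - j)) = St (i + (m - j)) := hdet' (m - j) j i heq.symm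
      have e1 : j + (m - j) = m := by omega
      have e2 : i + (m - j) = m + (i - j) := by omega
      rw [e1, e2] at h1
      have := congrFun h1 (0 : Fin (n + 1))
      simpa [hSt] using this.symm
end

section
/- Let φ be a coloring of a regular tree such that its factor complexity b(n) (the number of equivalence classes of colored n-balls) is nondecreasing. If b(n+1) = b(n) for some n, then b(m+1) = b(m) for all m ≥ n; equivalently, the factor complexity of a coloring of a tree is either bounded or strictly increasing. -/
open SimpleGraph

variable {V A : Type*}

/-- Equivalence of colored `n`-balls: a color-preserving isometry between the balls
of radius `n` centered at `u` and `v`, sending `u` to `v`. -/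
def BallEquiv (G : SimpleGraph V) (φ : V → A) (n : ℕ) (u v : V) : Prop :=
  ∃ f : V → V, f u = v ∧
    (∀ x y : V, G.dist u x ≤ n → G.dist u y ≤ n → G.dist (f x) (f y) = G.dist x y) ∧
    (∀ x : V, G.dist u x ≤ n → φ (f x) = φ x) ∧
    (∀ z : V, G.dist v z ≤ n → ∃ x : V, G.dist u x ≤ n ∧ f x = z)

/-- The factor complexity `b(n)`: the number of classes of colored `n`-balls. -/
noncomputable def complexity (G : SimpleGraph V) (φ : V → A) (n : ℕ) : ℕ :=
  Nat.card (Quot (BallEquiv G φ n))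

/-- The colored `n`-ball at `u` is special: it admits two inequivalent `(n+1)`-extensions. -/
def IsSpecialCenter (G : SimpleGraph V) (φ : V → A) (n : ℕ) (u : V) : Prop :=
  ∃ v, BallEquiv G φ n u v ∧ ¬ BallEquiv G φ (n+1) u v

/-- The type set `Λ_u` of a vertex. -/
def typeSet (G : SimpleGraph V) (φ : V → A) (u : V) : Set ℕ :=
  {n | IsSpecialCenter G φ n u}

/-- Two vertices are in the same class: their colored `n`-balls agree for all `n`. -/
def SameClass (G : SimpleGraph V) (φ : V → A) (u v : V) : Prop :=
  ∀ n, BallEquiv G φ n u v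

/-- `m` is the maximal type of `u`. -/
def MaxType (G : SimpleGraph V) (φ : V → A) (u : V) (m : ℕ) : Prop :=
  m ∈ typeSet G φ u ∧ ∀ k ∈ typeSet G φ u, k ≤ m

/-- Weak adjacency of classes of colored `n`-balls (given by representatives `x`, `y`). -/
def WeakAdj (G : SimpleGraph V) (φ : V → A) (n : ℕ) (x y : V) : Prop :=
  ∃ v w, G.Adj v w ∧ BallEquiv G φ n x v ∧ BallEquiv G φ n y w

/-- Strong adjacency: every ball of the class of `x` has a neighboring ball of the class of `y`. -/
def StrongAdj (G : SimpleGraph V) (φ : V → A) (n : ℕ) (x y : V) : Prop :=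
  ∀ v, BallEquiv G φ n x v → ∃ w, G.Adj v w ∧ BallEquiv G φ n y w

/-- The factor graph `𝒢ₙ` on classes of colored `n`-balls. -/
def FactorGraph (G : SimpleGraph V) (φ : V → A) (n : ℕ) :
    SimpleGraph (Quot (BallEquiv G φ n)) where
  Adj a b := a ≠ b ∧ ∃ u v, G.Adj u v ∧ Quot.mk _ u = a ∧ Quot.mk _ v = b
  symm := ⟨by rintro a b ⟨hne, u, v, h, hu, hv⟩; exact ⟨hne.symm, v, u, h.symm, hv, hu⟩⟩
  loopless := ⟨by rintro a ⟨hne, _⟩; exact hne rfl⟩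

/-- The quotient graph `X = Γ\T` on classes of vertices. -/
def QuotGraph (G : SimpleGraph V) (φ : V → A) :
    SimpleGraph (Quot (SameClass G φ)) where
  Adj a b := a ≠ b ∧ ∃ u v, G.Adj u v ∧ Quot.mk _ u = a ∧ Quot.mk _ v = b
  symm := ⟨by rintro a b ⟨hne, u, v, h, hu, hv⟩; exact ⟨hne.symm, v, u, h.symm, hv, hu⟩⟩
  loopless := ⟨by rintro a ⟨hne, _⟩; exact hne rfl⟩

namespace TCAux

variable {G : SimpleGraph V} {φ : V → A}

/-- The data of a ball isometry. -/
def IsIso (G : SimpleGraph V) (φ : V → A) (n : ℕ) (u v : V) (f : V → V) : Prop :=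
  f u = v ∧
    (∀ x y : V, G.dist u x ≤ n → G.dist u y ≤ n → G.dist (f x) (f y) = G.dist x y) ∧
    (∀ x : V, G.dist u x ≤ n → φ (f x) = φ x) ∧
    (∀ z : V, G.dist v z ≤ n → ∃ x : V, G.dist u x ≤ n ∧ f x = z)

lemma ballEquiv_iff {n : ℕ} {u v : V} :
    BallEquiv G φ n u v ↔ ∃ f, IsIso G φ n u v f := Iff.rfl

lemma IsIso.dist_map {n : ℕ} {u v : V} {f : V → V} (h : IsIso G φ n u v f)
    {x : V} (hx : G.dist u x ≤ n) : G.dist v (f x) = G.dist u x := by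
  have := h.2.1 u x (by simp [SimpleGraph.dist_self]) hx
  rwa [h.1] at this

lemma IsIso.inj (hc : G.Connected) {n : ℕ} {u v : V} {f : V → V} (h : IsIso G φ n u v f)
    {x y : V} (hx : G.dist u x ≤ n) (hy : G.dist u y ≤ n) (hxy : f x = f y) : x = y := by
  have hd := h.2.1 x y hx hy
  rw [hxy] at hd
  simp only [SimpleGraph.dist_self] at hd
  exact hc.dist_eq_zero_iff.1 hd.symm

lemma IsIso.restrict (hc : G.Connected) {r s : ℕ} {u v : V} {f : V → V}
    (h : IsIso G φ r u v f) {w : V} (hw : G.dist u w + s ≤ r) :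
    IsIso G φ s w (f w) f := by
  have hball : ∀ x : V, G.dist w x ≤ s → G.dist u x ≤ r := fun x hx => by
    have := hc.dist_triangle (u := u) (v := w) (w := x); omega
  refine ⟨rfl, ?_, ?_, ?_⟩
  · intro x y hx hy
    exact h.2.1 x y (hball x hx) (hball y hy)
  · intro x hx
    exact h.2.2.1 x (hball x hx)
  · intro z hz
    have hvw : G.dist v (f w) = G.dist u w := h.dist_map (by omega)
    have hvz : G.dist v z ≤ r := by
      have := hc.dist_triangle (u := v) (v := f w) (w := z); omega
    obtain ⟨x, hx1, hx2⟩ := h.2.2.2 z hvz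
    refine ⟨x, ?_, hx2⟩
    have := h.2.1 w x (by omega) hx1
    rw [hx2] at this
    omega

lemma ballEquiv_refl (n : ℕ) (u : V) : BallEquiv G φ n u u :=
  ⟨id, rfl, fun _ _ _ _ => rfl, fun _ _ => rfl, fun z hz => ⟨z, hz, rfl⟩⟩

lemma ballEquiv_symm (hc : G.Connected) {n : ℕ} {u v : V} (h : BallEquiv G φ n u v) :
    BallEquiv G φ n v u := by
  classical
  obtain ⟨f, hf⟩ := ballEquiv_iff.1 h
  have hinj := fun {x y} hx hy hxy => hf.inj (φ := φ) hc (x := x) (y := y) hx hy hxy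
  set g : V → V := fun z => if hz : ∃ x, G.dist u x ≤ n ∧ f x = z then hz.choose else z with hg
  have hgspec : ∀ z, G.dist v z ≤ n → G.dist u (g z) ≤ n ∧ f (g z) = z := by
    intro z hz
    have hex := hf.2.2.2 z hz
    simp only [hg, dif_pos hex]
    exact hex.choose_spec
  refine ⟨g, ?_, ?_, ?_, ?_⟩
  · obtain ⟨h1, h2⟩ := hgspec v (by simp [SimpleGraph.dist_self])
    exact hinj h1 (by simp [SimpleGraph.dist_self]) (h2.trans hf.1.symm)
  · intro x y hx hy
    obtain ⟨h1, h2⟩ := hgspec x hx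
    obtain ⟨h3, h4⟩ := hgspec y hy
    calc G.dist (g x) (g y) = G.dist (f (g x)) (f (g y)) := (hf.2.1 _ _ h1 h3).symm
    _ = G.dist x y := by rw [h2, h4]
  · intro x hx
    obtain ⟨h1, h2⟩ := hgspec x hx
    have := hf.2.2.1 _ h1
    rw [h2] at this
    exact this.symm
  · intro z hz
    have h1 : G.dist v (f z) ≤ n := by rw [hf.dist_map hz]; exact hz
    obtain ⟨h2, h3⟩ := hgspec (f z) h1
    exact ⟨f z, h1, hinj h2 hz h3⟩

lemma ballEquiv_trans {n : ℕ} {u v w : V} (h1 : BallEquiv G φ n u v)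
    (h2 : BallEquiv G φ n v w) : BallEquiv G φ n u w := by
  obtain ⟨f, hf⟩ := ballEquiv_iff.1 h1
  obtain ⟨g, hg⟩ := ballEquiv_iff.1 h2
  have hfb : ∀ x, G.dist u x ≤ n → G.dist v (f x) ≤ n := fun x hx => by
    rw [hf.dist_map hx]; exact hx
  refine ⟨g ∘ f, by simp [hf.1, hg.1], ?_, ?_, ?_⟩
  · intro x y hx hy
    simp only [Function.comp_apply]
    rw [hg.2.1 _ _ (hfb x hx) (hfb y hy), hf.2.1 _ _ hx hy]
  · intro x hx
    simp only [Function.comp_apply]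
    rw [hg.2.2.1 _ (hfb x hx), hf.2.2.1 _ hx]
  · intro z hz
    obtain ⟨y, hy1, hy2⟩ := hg.2.2.2 z hz
    obtain ⟨x, hx1, hx2⟩ := hf.2.2.2 y hy1
    exact ⟨x, hx1, by simp [hx2, hy2]⟩

lemma ballEquiv_equivalence (hc : G.Connected) (n : ℕ) :
    Equivalence (BallEquiv G φ n) :=
  ⟨fun u => ballEquiv_refl n u, ballEquiv_symm hc, ballEquiv_trans⟩

lemma ballEquiv_mono {n n' : ℕ} (hn : n' ≤ n) {u v : V} (h : BallEquiv G φ n u v) :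
    BallEquiv G φ n' u v := by
  obtain ⟨f, hf⟩ := ballEquiv_iff.1 h
  refine ⟨f, hf.1, fun x y hx hy => hf.2.1 x y (by omega) (by omega),
    fun x hx => hf.2.2.1 x (by omega), ?_⟩
  intro z hz
  obtain ⟨x, hx1, hx2⟩ := hf.2.2.2 z (by omega)
  refine ⟨x, ?_, hx2⟩
  have := hf.2.1 u x (by simp [SimpleGraph.dist_self]) hx1
  rw [hf.1, hx2] at this
  omega

lemma ballEquiv_color {n : ℕ} {u v : V} (h : BallEquiv G φ n u v) : φ v = φ u := by
  obtain ⟨f, hf⟩ := ballEquiv_iff.1 h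
  have := hf.2.2.1 u (by simp [SimpleGraph.dist_self])
  rwa [hf.1] at this

lemma ballEquiv_zero_of_color (hc : G.Connected) {a b : V} (hab : φ a = φ b) :
    BallEquiv G φ 0 a b := by
  classical
  refine ⟨fun t => if t = a then b else t, if_pos rfl, ?_, ?_, ?_⟩
  · intro x y hx hy
    have hx0 : a = x := hc.dist_eq_zero_iff.1 (Nat.le_zero.1 hx)
    have hy0 : a = y := hc.dist_eq_zero_iff.1 (Nat.le_zero.1 hy)
    subst hx0; subst hy0; simp [SimpleGraph.dist_self]
  · intro x hx
    have hx0 : a = x := hc.dist_eq_zero_iff.1 (Nat.le_zero.1 hx)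
    subst hx0; simp [hab]
  · intro z hz
    have hz0 : b = z := hc.dist_eq_zero_iff.1 (Nat.le_zero.1 hz)
    subst hz0
    exact ⟨a, by simp [SimpleGraph.dist_self], if_pos rfl⟩

end TCAux

namespace TCAux

variable {V A : Type*} {G : SimpleGraph V} {φ : V → A}

lemma tree_path_length (htree : G.IsTree) {x y : V} {p : G.Walk x y} (hp : p.IsPath) :
    p.length = G.dist x y := by
  obtain ⟨q, hq, hql⟩ := htree.isConnected.exists_path_of_dist x y
  rw [(htree.existsUnique_path x y).unique hp hq, hql]

lemma concat_isPath (htree : G.IsTree) {r z w : V} {p : G.Walk r z} (hp : p.IsPath)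
    (h : G.Adj z w) (hw : w ∉ p.support) : (p.concat h).IsPath := by
  rw [← SimpleGraph.Walk.isPath_reverse_iff, SimpleGraph.Walk.reverse_concat]
  refine hp.reverse.cons ?_
  simpa [SimpleGraph.Walk.support_reverse] using hw

lemma adj_level (htree : G.IsTree) (r : V) {z w : V} (h : G.Adj z w) :
    G.dist r w = G.dist r z + 1 ∨ G.dist r z = G.dist r w + 1 := by
  classical
  obtain ⟨p, hp, hpl⟩ := htree.isConnected.exists_path_of_dist r z
  by_cases hw : w ∈ p.support
  · right
    have h1 : G.dist r w ≤ (p.takeUntil w hw).length := SimpleGraph.dist_le _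
    have h2 : G.dist w z ≤ (p.dropUntil w hw).length := SimpleGraph.dist_le _
    have h3 : (p.takeUntil w hw).length + (p.dropUntil w hw).length = p.length := by
      rw [← SimpleGraph.Walk.length_append, p.take_spec hw]
    have h4 : G.dist r z ≤ G.dist r w + G.dist w z := htree.isConnected.dist_triangle
    have h5 : G.dist w z = 1 := SimpleGraph.dist_eq_one_iff_adj.2 h.symm
    omega
  · left
    have hq := concat_isPath htree hp h hw
    have := tree_path_length htree hq
    rw [SimpleGraph.Walk.length_concat, hpl] at this
    omega

lemma parent_unique (htree : G.IsTree) (r : V) {z c₁ c₂ : V}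
    (h₁ : G.Adj z c₁) (h₂ : G.Adj z c₂)
    (hd₁ : G.dist r c₁ + 1 = G.dist r z) (hd₂ : G.dist r c₂ + 1 = G.dist r z) : c₁ = c₂ := by
  classical
  obtain ⟨p₁, hp₁, hl₁⟩ := htree.isConnected.exists_path_of_dist r c₁
  obtain ⟨p₂, hp₂, hl₂⟩ := htree.isConnected.exists_path_of_dist r c₂
  have hz₁ : z ∉ p₁.support := by
    intro hz
    have h5 : G.dist r z ≤ (p₁.takeUntil z hz).length := SimpleGraph.dist_le _
    have h6 := SimpleGraph.Walk.length_takeUntil_le p₁ hz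
    omega
  have hz₂ : z ∉ p₂.support := by
    intro hz
    have h5 : G.dist r z ≤ (p₂.takeUntil z hz).length := SimpleGraph.dist_le _
    have h6 := SimpleGraph.Walk.length_takeUntil_le p₂ hz
    omega
  have hq₁ := concat_isPath htree hp₁ h₁.symm hz₁
  have hq₂ := concat_isPath htree hp₂ h₂.symm hz₂
  have heq : p₁.concat h₁.symm = p₂.concat h₂.symm :=
    (htree.existsUnique_path r z).unique hq₁ hq₂
  have e₁ : (p₁.concat h₁.symm).getVert (G.dist r z - 1) = c₁ := by
    rw [SimpleGraph.Walk.concat_eq_append, SimpleGraph.Walk.getVert_append]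
    rw [if_neg (by omega)]
    have hz0 : G.dist r z - 1 - p₁.length = 0 := by omega
    rw [hz0, SimpleGraph.Walk.getVert_zero]
  have e₂ : (p₂.concat h₂.symm).getVert (G.dist r z - 1) = c₂ := by
    rw [SimpleGraph.Walk.concat_eq_append, SimpleGraph.Walk.getVert_append]
    rw [if_neg (by omega)]
    have hz0 : G.dist r z - 1 - p₂.length = 0 := by omega
    rw [hz0, SimpleGraph.Walk.getVert_zero]
  rw [heq] at e₁
  exact e₁.symm.trans e₂

open Classical in
/-- The parent of `z` with respect to the root `r`. -/
noncomputable def par (G : SimpleGraph V) (r z : V) : V :=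
  if h : ∃ p, G.Adj z p ∧ G.dist r p + 1 = G.dist r z then h.choose else r

lemma par_spec (htree : G.IsTree) {r z : V} (hz : z ≠ r) :
    G.Adj z (par G r z) ∧ G.dist r (par G r z) + 1 = G.dist r z := by
  have hpos : 0 < G.dist r z := htree.isConnected.pos_dist_of_ne (Ne.symm hz)
  obtain ⟨p, hp, hl⟩ := htree.isConnected.exists_path_of_dist r z
  have hex : ∃ c, G.Adj z c ∧ G.dist r c + 1 = G.dist r z := by
    obtain ⟨c, ha, q, hq⟩ := SimpleGraph.Walk.exists_eq_cons_of_ne hz p.reverse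
    refine ⟨c, ha, ?_⟩
    have hlen : q.length + 1 = p.length := by
      have := congrArg SimpleGraph.Walk.length hq
      simp only [SimpleGraph.Walk.length_reverse, SimpleGraph.Walk.length_cons] at this
      omega
    have h1 : G.dist r c ≤ q.length := by
      rw [SimpleGraph.dist_comm]
      exact SimpleGraph.dist_le q
    have h2 : G.dist r z ≤ G.dist r c + 1 := by
      have h3 := htree.isConnected.dist_triangle (u := r) (v := c) (w := z)
      have h4 : G.dist c z = 1 := SimpleGraph.dist_eq_one_iff_adj.2 ha.symm
      omega
    omega
  rw [par, dif_pos hex]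
  exact hex.choose_spec

lemma par_iter (htree : G.IsTree) (r : V) :
    ∀ (t : ℕ) (z : V), t ≤ G.dist r z →
      G.dist r ((par G r)^[t] z) + t = G.dist r z ∧ G.dist ((par G r)^[t] z) z ≤ t := by
  intro t
  induction t with
  | zero => intro z _; simp [SimpleGraph.dist_self]
  | succ t ih =>
    intro z ht
    obtain ⟨h1, h2⟩ := ih z (by omega)
    set z' := (par G r)^[t] z with hz'
    have hz'ne : z' ≠ r := by
      intro e
      rw [e, SimpleGraph.dist_self] at h1
      omega
    obtain ⟨ha, hd⟩ := par_spec htree hz'ne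
    rw [Function.iterate_succ_apply', ← hz']
    refine ⟨by omega, ?_⟩
    have h3 : G.dist (par G r z') z ≤ G.dist (par G r z') z' + G.dist z' z :=
      htree.isConnected.dist_triangle
    have h4 : G.dist (par G r z') z' = 1 := by
      rw [SimpleGraph.dist_comm]
      exact SimpleGraph.dist_eq_one_iff_adj.2 ha
    omega

/-- The ancestor of `z` at level `j` with respect to the root `r`. -/
noncomputable def anc (G : SimpleGraph V) (r : V) (j : ℕ) (z : V) : V :=
  (par G r)^[G.dist r z - j] z

lemma anc_level (htree : G.IsTree) {r : V} {j : ℕ} {z : V} (hj : j ≤ G.dist r z) :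
    G.dist r (anc G r j z) = j := by
  have := (par_iter htree r (G.dist r z - j) z (by omega)).1
  unfold anc
  omega

lemma anc_dist (htree : G.IsTree) {r : V} {j : ℕ} {z : V} (hj : j ≤ G.dist r z) :
    G.dist (anc G r j z) z ≤ G.dist r z - j :=
  (par_iter htree r (G.dist r z - j) z (by omega)).2

lemma anc_self (r : V) (z : V) : anc G r (G.dist r z) z = z := by
  unfold anc
  simp

lemma anc_par (htree : G.IsTree) {r z : V} {j : ℕ} (hz : z ≠ r) (hj : j + 1 ≤ G.dist r z) :
    anc G r j (par G r z) = anc G r j z := by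
  obtain ⟨ha, hd⟩ := par_spec htree hz
  unfold anc
  have h1 : G.dist r (par G r z) = G.dist r z - 1 := by omega
  rw [h1]
  have h2 : G.dist r z - j = (G.dist r z - 1 - j) + 1 := by omega
  rw [h2, Function.iterate_succ_apply]

lemma anc_comp (htree : G.IsTree) {r z : V} {j j' : ℕ} (hjj : j ≤ j') (hj' : j' ≤ G.dist r z) :
    anc G r j (anc G r j' z) = anc G r j z := by
  have hl := anc_level htree hj'
  unfold anc at hl ⊢
  rw [hl, ← Function.iterate_add_apply]
  congr 1
  omega

lemma tree_dist_formula (htree : G.IsTree) (r : V) :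
    ∀ (D : ℕ) (z w : V), G.dist z w = D →
      ∃ j, j ≤ G.dist r z ∧ j ≤ G.dist r w ∧ anc G r j z = anc G r j w ∧
        G.dist z w + 2 * j = G.dist r z + G.dist r w := by
  have hc := htree.isConnected
  intro D
  induction D using Nat.strong_induction_on with
  | _ D ih =>
    intro z w hD
    rcases Nat.eq_zero_or_pos D with h0 | hpos
    · subst h0
      have hzw : z = w := hc.dist_eq_zero_iff.1 hD
      subst hzw
      exact ⟨G.dist r z, le_rfl, le_rfl, rfl, by rw [hD]; omega⟩
    · have hzw : z ≠ w := by
        intro e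
        rw [e, SimpleGraph.dist_self] at hD
        omega
      obtain ⟨p, hp, hl⟩ := hc.exists_path_of_dist z w
      obtain ⟨c, hwc, q, hq⟩ := SimpleGraph.Walk.exists_eq_cons_of_ne (Ne.symm hzw) p.reverse
      have hql : q.length + 1 = D := by
        have := congrArg SimpleGraph.Walk.length hq
        simp only [SimpleGraph.Walk.length_reverse, SimpleGraph.Walk.length_cons] at this
        omega
      have hzc : G.dist z c = D - 1 := by
        have h1 : G.dist z c ≤ q.length := by
          rw [SimpleGraph.dist_comm]; exact SimpleGraph.dist_le q
        have h2 : G.dist z w ≤ G.dist z c + 1 := by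
          have h3 := hc.dist_triangle (u := z) (v := c) (w := w)
          have h4 : G.dist c w = 1 := SimpleGraph.dist_eq_one_iff_adj.2 hwc.symm
          omega
        omega
      obtain ⟨j, hj1, hj2, hanc, hform⟩ := ih (D - 1) (by omega) z c hzc
      rcases adj_level htree r hwc with hA | hB
      · -- hA : dist r c = dist r w + 1 ; c is below w
        have hcr : c ≠ r := by
          intro e; rw [e, SimpleGraph.dist_self] at hA; omega
        have hparc : par G r c = w := by
          obtain ⟨ha, hd⟩ := par_spec htree hcr
          exact parent_unique htree r ha hwc.symm hd (by omega)
        rcases Nat.lt_or_ge j (G.dist r c) with hjlt | hjge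
        · exfalso
          have hanc' : anc G r j c = anc G r j w := by
            rw [← hparc]
            exact (anc_par htree hcr (by omega)).symm
          have hb1 : G.dist (anc G r j z) z ≤ G.dist r z - j := anc_dist htree hj1
          have hb2 : G.dist (anc G r j w) w ≤ G.dist r w - j := anc_dist htree (by omega)
          have ht1 : G.dist z w ≤ G.dist z (anc G r j z) + G.dist (anc G r j z) w :=
            hc.dist_triangle
          rw [hanc, hanc'] at ht1 hb1
          rw [SimpleGraph.dist_comm (u := z) (v := anc G r j w)] at ht1
          omega
        · -- j = dist r c
          have hjc : j = G.dist r c := le_antisymm hj2 hjge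
          refine ⟨G.dist r w, by omega, le_rfl, ?_, by omega⟩
          have hancc : anc G r j c = c := by rw [hjc]; exact anc_self r c
          have h1 : anc G r (G.dist r w) z = anc G r (G.dist r w) (anc G r j z) :=
            (anc_comp htree (by omega) hj1).symm
          have h2 : anc G r (G.dist r w) c = w := by
            unfold anc
            have he : G.dist r c - G.dist r w = 1 := by omega
            rw [he]
            simpa using hparc
          rw [h1, hanc, hancc, h2, anc_self]
      · -- hB : dist r w = dist r c + 1 ; w is below c
        have hwr : w ≠ r := by
          intro e; rw [e, SimpleGraph.dist_self] at hB; omega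
        have hparw : par G r w = c := by
          obtain ⟨ha, hd⟩ := par_spec htree hwr
          exact parent_unique htree r ha hwc hd (by omega)
        refine ⟨j, hj1, by omega, ?_, by omega⟩
        rw [hanc, ← hparw]
        exact anc_par htree hwr (by omega)

end TCAux

namespace TCAux

variable {V A : Type*} {G : SimpleGraph V} {φ : V → A}

lemma exists_childBij (htree : G.IsTree) {m : ℕ}
    (hP : ∀ x y : V, BallEquiv G φ m x y → BallEquiv G φ (m+1) x y)
    {u v p p' q' : V} (hR : BallEquiv G φ m p p')
    (hlvl : G.dist v p' = G.dist u p)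
    (hroot : p = u → p' = v)
    (hq' : p ≠ u → G.Adj p' q' ∧ G.dist v q' + 1 = G.dist u p ∧ BallEquiv G φ m (par G u p) q') :
    ∃ β : V → V,
      (∀ w, G.Adj p w → G.dist u w = G.dist u p + 1 →
        G.Adj p' (β w) ∧ G.dist v (β w) = G.dist u p + 1 ∧ BallEquiv G φ m w (β w)) ∧
      (∀ w w', G.Adj p w → G.dist u w = G.dist u p + 1 → G.Adj p w' →
        G.dist u w' = G.dist u p + 1 → β w = β w' → w = w') ∧
      (∀ y, G.Adj p' y → G.dist v y = G.dist u p + 1 →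
        ∃ w, G.Adj p w ∧ G.dist u w = G.dist u p + 1 ∧ β w = y) := by
  classical
  have hc := htree.isConnected
  obtain ⟨g, hg⟩ := ballEquiv_iff.1 (hP p p' hR)
  have hgadj : ∀ w, G.Adj p w → G.Adj p' (g w) := by
    intro w hw
    have h1 : G.dist p w ≤ m + 1 := by rw [SimpleGraph.dist_eq_one_iff_adj.2 hw]; omega
    have h2 := hg.dist_map h1
    rw [SimpleGraph.dist_eq_one_iff_adj.2 hw] at h2
    exact SimpleGraph.dist_eq_one_iff_adj.1 h2
  have hgR : ∀ w, G.Adj p w → BallEquiv G φ m w (g w) := by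
    intro w hw
    refine ⟨g, hg.restrict hc ?_⟩
    rw [SimpleGraph.dist_eq_one_iff_adj.2 hw]
    omega
  have hginj : ∀ w w', G.Adj p w → G.Adj p w' → g w = g w' → w = w' := by
    intro w w' hw hw' hww
    exact hg.inj hc (by rw [SimpleGraph.dist_eq_one_iff_adj.2 hw]; omega)
      (by rw [SimpleGraph.dist_eq_one_iff_adj.2 hw']; omega) hww
  have hgsurj : ∀ y, G.Adj p' y → ∃ x, G.Adj p x ∧ g x = y := by
    intro y hy
    obtain ⟨x, hx1, hx2⟩ := hg.2.2.2 y (by rw [SimpleGraph.dist_eq_one_iff_adj.2 hy]; omega)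
    refine ⟨x, ?_, hx2⟩
    have h5 := hg.dist_map hx1
    rw [hx2, SimpleGraph.dist_eq_one_iff_adj.2 hy] at h5
    exact SimpleGraph.dist_eq_one_iff_adj.1 h5.symm
  by_cases hpu : p = u
  · subst hpu
    have hp'v : p' = v := hroot rfl
    subst hp'v
    refine ⟨g, ?_, ?_, ?_⟩
    · intro w hw _
      refine ⟨hgadj w hw, ?_, hgR w hw⟩
      rw [SimpleGraph.dist_self, SimpleGraph.dist_eq_one_iff_adj]
      exact hgadj w hw
    · intro w w' hw _ hw' _ hww
      exact hginj w w' hw hw' hww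
    · intro y hy _
      obtain ⟨x, hx1, hx2⟩ := hgsurj y hy
      refine ⟨x, hx1, ?_, hx2⟩
      rw [SimpleGraph.dist_self, SimpleGraph.dist_eq_one_iff_adj]
      exact hx1
  · obtain ⟨hq'adj, hq'lvl, hq'R⟩ := hq' hpu
    obtain ⟨hpq, hpqd⟩ := par_spec htree (r := u) hpu
    have hβlvl : ∀ y, G.Adj p' y → y ≠ q' → G.dist v y = G.dist u p + 1 := by
      intro y hy hne
      rcases adj_level htree v hy with h1 | h2
      · rw [h1, hlvl]
      · exact absurd (parent_unique htree v hy hq'adj (by omega) (by omega)) hne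
    have hulvl : ∀ x, G.Adj p x → x ≠ par G u p → G.dist u x = G.dist u p + 1 := by
      intro x hx hne
      rcases adj_level htree u hx with h1 | h2
      · exact h1
      · exact absurd (parent_unique htree u hx hpq (by omega) (by omega)) hne
    have hchild_ne_q : ∀ w, G.dist u w = G.dist u p + 1 → w ≠ par G u p := by
      intro w hw e; rw [e] at hw; omega
    have hq'lvl2 : ∀ y, G.dist v y = G.dist u p + 1 → y ≠ q' := by
      intro y hy e; rw [e] at hy; omega
    refine ⟨fun w => if g w = q' then g (par G u p) else g w, ?_, ?_, ?_⟩
    · intro w hw hwl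
      dsimp only
      have hwq : w ≠ par G u p := hchild_ne_q w hwl
      by_cases hgw : g w = q'
      · rw [if_pos hgw]
        have hgqne : g (par G u p) ≠ q' := by
          intro e
          exact hwq (hginj w (par G u p) hw hpq (hgw.trans e.symm))
        refine ⟨hgadj _ hpq, hβlvl _ (hgadj _ hpq) hgqne, ?_⟩
        have r1 : BallEquiv G φ m w q' := hgw ▸ hgR w hw
        have r2 : BallEquiv G φ m (par G u p) (g (par G u p)) := hgR _ hpq
        exact ballEquiv_trans (ballEquiv_trans r1 (ballEquiv_symm hc hq'R)) r2
      · rw [if_neg hgw]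
        exact ⟨hgadj w hw, hβlvl _ (hgadj w hw) hgw, hgR w hw⟩
    · intro w w' hw hwl hw' hwl' hββ
      dsimp only at hββ
      have hwq : w ≠ par G u p := hchild_ne_q w hwl
      have hwq' : w' ≠ par G u p := hchild_ne_q w' hwl'
      by_cases h1 : g w = q'
      · by_cases h2 : g w' = q'
        · exact hginj w w' hw hw' (h1.trans h2.symm)
        · rw [if_pos h1, if_neg h2] at hββ
          exact absurd (hginj w' (par G u p) hw' hpq hββ.symm) hwq'
      · by_cases h2 : g w' = q'
        · rw [if_neg h1, if_pos h2] at hββ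
          exact absurd (hginj w (par G u p) hw hpq hββ) hwq
        · rw [if_neg h1, if_neg h2] at hββ
          exact hginj w w' hw hw' hββ
    · intro y hy hyl
      dsimp only
      have hyq' : y ≠ q' := hq'lvl2 y hyl
      obtain ⟨x, hx1, hx2⟩ := hgsurj y hy
      by_cases hxq : x = par G u p
      · rw [hxq] at hx2
        obtain ⟨x₂, hx₂1, hx₂2⟩ := hgsurj q' hq'adj
        have hx₂q : x₂ ≠ par G u p := by
          intro e
          rw [e, hx2] at hx₂2
          exact hyq' hx₂2.symm.symm
        refine ⟨x₂, hx₂1, hulvl x₂ hx₂1 hx₂q, ?_⟩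
        rw [if_pos hx₂2]
        exact hx2
      · refine ⟨x, hx1, hulvl x hx1 hxq, ?_⟩
        have hne : g x ≠ q' := by rw [hx2]; exact hyq'
        rw [if_neg hne]
        exact hx2

/-- Partial isomorphism data up to level `k`. -/
def GoodMap (G : SimpleGraph V) (φ : V → A) (m : ℕ) (u v : V) (k : ℕ) (F : V → V) : Prop :=
  F u = v ∧
  (∀ z, G.dist u z ≤ k → G.dist v (F z) = G.dist u z) ∧
  (∀ z, G.dist u z ≤ k → BallEquiv G φ m z (F z)) ∧
  (∀ z, z ≠ u → G.dist u z ≤ k → G.Adj (F (par G u z)) (F z)) ∧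
  (∀ z z', G.dist u z ≤ k → G.dist u z' ≤ k → F z = F z' → z = z') ∧
  (∀ y, G.dist v y ≤ k → ∃ z, G.dist u z ≤ k ∧ F z = y)

lemma good_zero (htree : G.IsTree) {m : ℕ} {u v : V} (h : BallEquiv G φ (m+1) u v) :
    ∃ F, GoodMap G φ m u v 0 F := by
  classical
  have hc := htree.isConnected
  refine ⟨fun z => if z = u then v else z, by simp, ?_, ?_, ?_, ?_, ?_⟩
  · intro z hz
    have he : u = z := hc.dist_eq_zero_iff.1 (Nat.le_zero.1 hz)
    subst he
    simp [SimpleGraph.dist_self]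
  · intro z hz
    have he : u = z := hc.dist_eq_zero_iff.1 (Nat.le_zero.1 hz)
    subst he
    simpa using ballEquiv_mono (Nat.le_succ m) h
  · intro z hz h0
    exact absurd (hc.dist_eq_zero_iff.1 (Nat.le_zero.1 h0)).symm hz
  · intro z z' hz hz' _
    have e1 : u = z := hc.dist_eq_zero_iff.1 (Nat.le_zero.1 hz)
    have e2 : u = z' := hc.dist_eq_zero_iff.1 (Nat.le_zero.1 hz')
    rw [← e1, ← e2]
  · intro y hy
    have he : v = y := hc.dist_eq_zero_iff.1 (Nat.le_zero.1 hy)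
    exact ⟨u, by simp [SimpleGraph.dist_self], by simp [he]⟩

lemma good_succ (htree : G.IsTree) {m : ℕ}
    (hP : ∀ x y : V, BallEquiv G φ m x y → BallEquiv G φ (m+1) x y)
    {u v : V} {k : ℕ} (h : ∃ F, GoodMap G φ m u v k F) :
    ∃ F, GoodMap G φ m u v (k+1) F := by
  classical
  have hc := htree.isConnected
  obtain ⟨F, hF1, hF2, hF3, hF4, hF5, hF6⟩ := h
  have H : ∀ p : V, ∃ β : V → V, G.dist u p = k →
      ((∀ w, G.Adj p w → G.dist u w = G.dist u p + 1 →
        G.Adj (F p) (β w) ∧ G.dist v (β w) = G.dist u p + 1 ∧ BallEquiv G φ m w (β w)) ∧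
      (∀ w w', G.Adj p w → G.dist u w = G.dist u p + 1 → G.Adj p w' →
        G.dist u w' = G.dist u p + 1 → β w = β w' → w = w') ∧
      (∀ y, G.Adj (F p) y → G.dist v y = G.dist u p + 1 →
        ∃ w, G.Adj p w ∧ G.dist u w = G.dist u p + 1 ∧ β w = y)) := by
    intro p
    by_cases hp : G.dist u p = k
    · have hRp : BallEquiv G φ m p (F p) := hF3 p (by omega)
      have hlvl : G.dist v (F p) = G.dist u p := hF2 p (by omega)
      have hroot : p = u → F p = v := fun e => by rw [e, hF1]
      have hq'fn : p ≠ u → G.Adj (F p) (F (par G u p)) ∧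
          G.dist v (F (par G u p)) + 1 = G.dist u p ∧
          BallEquiv G φ m (par G u p) (F (par G u p)) := by
        intro hne
        obtain ⟨hpq, hpqd⟩ := par_spec htree (r := u) hne
        have hqk : G.dist u (par G u p) ≤ k := by omega
        exact ⟨(hF4 p hne (by omega)).symm, by rw [hF2 _ hqk]; omega, hF3 _ hqk⟩
      obtain ⟨β, hβ⟩ := exists_childBij htree hP hRp hlvl hroot hq'fn
      exact ⟨β, fun _ => hβ⟩
    · exact ⟨id, fun hk => absurd hk hp⟩
  choose B hB using H
  refine ⟨fun z => if G.dist u z ≤ k then F z else B (par G u z) z, ?_⟩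
  set F' : V → V := fun z => if G.dist u z ≤ k then F z else B (par G u z) z with hF'def
  have hold : ∀ z, G.dist u z ≤ k → F' z = F z := by
    intro z hz; simp only [hF'def, if_pos hz]
  have hnew : ∀ z, G.dist u z = k + 1 →
      G.Adj (F (par G u z)) (F' z) ∧ G.dist v (F' z) = k + 1 ∧ BallEquiv G φ m z (F' z) := by
    intro z hz
    have hzu : z ≠ u := by intro e; rw [e, SimpleGraph.dist_self] at hz; omega
    obtain ⟨hpz, hpzd⟩ := par_spec htree (r := u) hzu
    have hpk : G.dist u (par G u z) = k := by omega
    have hprops := hB (par G u z) hpk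
    have hchild := hprops.1 z hpz.symm (by omega)
    have he : F' z = B (par G u z) z := by
      simp only [hF'def, if_neg (by omega : ¬ G.dist u z ≤ k)]
    rw [he]
    exact ⟨hchild.1, by rw [hchild.2.1]; omega, hchild.2.2⟩
  refine ⟨?_, ?_, ?_, ?_, ?_, ?_⟩
  · rw [hold u (by rw [SimpleGraph.dist_self]; omega)]; exact hF1
  · intro z hz
    by_cases hle : G.dist u z ≤ k
    · rw [hold z hle]; exact hF2 z hle
    · have hz1 : G.dist u z = k + 1 := by omega
      rw [(hnew z hz1).2.1, hz1]
  · intro z hz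
    by_cases hle : G.dist u z ≤ k
    · rw [hold z hle]; exact hF3 z hle
    · exact (hnew z (by omega)).2.2
  · intro z hzu hz
    by_cases hle : G.dist u z ≤ k
    · obtain ⟨hpz, hpzd⟩ := par_spec htree (r := u) hzu
      rw [hold z hle, hold (par G u z) (by omega)]
      exact hF4 z hzu hle
    · have hz1 : G.dist u z = k + 1 := by omega
      obtain ⟨hpz, hpzd⟩ := par_spec htree (r := u) hzu
      rw [hold (par G u z) (by omega)]
      exact (hnew z hz1).1
  · intro z z' hz hz' heq
    by_cases h1 : G.dist u z ≤ k <;> by_cases h2 : G.dist u z' ≤ k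
    · rw [hold z h1, hold z' h2] at heq
      exact hF5 z z' h1 h2 heq
    · exfalso
      have l1 : G.dist v (F' z) = G.dist u z := by rw [hold z h1]; exact hF2 z h1
      have l2 := (hnew z' (by omega)).2.1
      rw [heq] at l1
      omega
    · exfalso
      have l2 : G.dist v (F' z') = G.dist u z' := by rw [hold z' h2]; exact hF2 z' h2
      have l1 := (hnew z (by omega)).2.1
      rw [heq] at l1
      omega
    · have hz1 : G.dist u z = k + 1 := by omega
      have hz1' : G.dist u z' = k + 1 := by omega
      have hzu : z ≠ u := by intro e; rw [e, SimpleGraph.dist_self] at hz1; omega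
      have hzu' : z' ≠ u := by intro e; rw [e, SimpleGraph.dist_self] at hz1'; omega
      obtain ⟨hpz, hpzd⟩ := par_spec htree (r := u) hzu
      obtain ⟨hpz', hpzd'⟩ := par_spec htree (r := u) hzu'
      have hn := hnew z hz1
      have hn' := hnew z' hz1'
      have hpp : F (par G u z) = F (par G u z') := by
        refine parent_unique htree v (z := F' z) hn.1.symm ?_ ?_ ?_
        · rw [heq]; exact hn'.1.symm
        · rw [hF2 _ (by omega : G.dist u (par G u z) ≤ k), hn.2.1]; omega
        · rw [hF2 _ (by omega : G.dist u (par G u z') ≤ k), hn.2.1]; omega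
      have hpp2 : par G u z = par G u z' :=
        hF5 _ _ (by omega) (by omega) hpp
      have hBz : F' z = B (par G u z) z := by
        simp only [hF'def, if_neg (by omega : ¬ G.dist u z ≤ k)]
      have hBz' : F' z' = B (par G u z) z' := by
        simp only [hF'def, if_neg (by omega : ¬ G.dist u z' ≤ k), ← hpp2]
      have hpk : G.dist u (par G u z) = k := by omega
      refine (hB (par G u z) hpk).2.1 z z' hpz.symm (by omega) ?_ (by omega) ?_
      · rw [hpp2]; exact hpz'.symm
      · rw [← hBz, ← hBz', heq]
  · intro y hy
    by_cases hyk : G.dist v y ≤ k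
    · obtain ⟨z, hz, hzF⟩ := hF6 y hyk
      exact ⟨z, by omega, by rw [hold z hz]; exact hzF⟩
    · have hy1 : G.dist v y = k + 1 := by omega
      have hyv : y ≠ v := by intro e; rw [e, SimpleGraph.dist_self] at hy1; omega
      obtain ⟨hqy, hqyd⟩ := par_spec htree (r := v) hyv
      obtain ⟨p, hp, hpF⟩ := hF6 (par G v y) (by omega)
      have hpk : G.dist u p = k := by
        have := hF2 p hp
        rw [hpF] at this
        omega
      have hsurj := (hB p hpk).2.2 y (by rw [hpF]; exact hqy.symm) (by omega)
      obtain ⟨w, hw1, hw2, hw3⟩ := hsurj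
      have hwu : w ≠ u := by
        intro e; rw [e, SimpleGraph.dist_self] at hw2; omega
      obtain ⟨hpw, hpwd⟩ := par_spec htree (r := u) hwu
      have hpar : par G u w = p :=
        parent_unique htree u hpw hw1.symm hpwd (by omega)
      refine ⟨w, by omega, ?_⟩
      simp only [hF'def, if_neg (by omega : ¬ G.dist u w ≤ k), hpar]
      exact hw3

lemma good_final (htree : G.IsTree) {m : ℕ} {u v : V} {F : V → V}
    (hG : GoodMap G φ m u v (m+2) F) : BallEquiv G φ (m+2) u v := by
  have hc := htree.isConnected
  obtain ⟨hF1, hF2, hF3, hF4, hF5, hF6⟩ := hG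
  have hFv_ne : ∀ z, z ≠ u → G.dist u z ≤ m+2 → F z ≠ v := by
    intro z hz hzk e
    have h1 := hF2 z hzk
    rw [e, SimpleGraph.dist_self] at h1
    exact hz (hc.dist_eq_zero_iff.1 h1.symm).symm
  have hFpar : ∀ z, z ≠ u → G.dist u z ≤ m+2 → F (par G u z) = par G v (F z) := by
    intro z hz hzk
    obtain ⟨hpz, hpzd⟩ := par_spec htree (r := u) hz
    obtain ⟨hpv, hpvd⟩ := par_spec htree (r := v) (hFv_ne z hz hzk)
    refine parent_unique htree v (hF4 z hz hzk).symm hpv ?_ hpvd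
    rw [hF2 _ (by omega), hF2 _ hzk]
    omega
  have hFiter : ∀ t z, G.dist u z ≤ m+2 → t ≤ G.dist u z →
      F ((par G u)^[t] z) = (par G v)^[t] (F z) := by
    intro t
    induction t with
    | zero => intro z _ _; rfl
    | succ t ih =>
      intro z hzk ht
      have hzu : z ≠ u := by intro e; rw [e, SimpleGraph.dist_self] at ht; omega
      obtain ⟨hpz, hpzd⟩ := par_spec htree (r := u) hzu
      rw [Function.iterate_succ_apply, Function.iterate_succ_apply]
      rw [ih (par G u z) (by omega) (by omega), hFpar z hzu hzk]
  have hFanc : ∀ j z, G.dist u z ≤ m+2 → j ≤ G.dist u z →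
      F (anc G u j z) = anc G v j (F z) := by
    intro j z hzk hj
    unfold anc
    rw [hF2 z hzk]
    exact hFiter (G.dist u z - j) z hzk (by omega)
  refine ⟨F, hF1, ?_, ?_, hF6⟩
  · intro x y hx hy
    obtain ⟨j, hj1, hj2, hanc, hform⟩ := tree_dist_formula htree u (G.dist x y) x y rfl
    obtain ⟨j', hk1, hk2, hanc', hform'⟩ :=
      tree_dist_formula htree v (G.dist (F x) (F y)) (F x) (F y) rfl
    have l1 := hF2 x hx
    have l2 := hF2 y hy
    have le1 : G.dist (F x) (F y) ≤ G.dist x y := by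
      have e1 : anc G v j (F x) = anc G v j (F y) := by
        rw [← hFanc j x hx hj1, hanc, hFanc j y hy hj2]
      have d1 : G.dist (anc G v j (F x)) (F x) ≤ G.dist v (F x) - j :=
        anc_dist htree (by omega)
      rw [e1] at d1
      have d2 : G.dist (anc G v j (F y)) (F y) ≤ G.dist v (F y) - j :=
        anc_dist htree (by omega)
      have ht : G.dist (F x) (F y) ≤
          G.dist (F x) (anc G v j (F y)) + G.dist (anc G v j (F y)) (F y) :=
        hc.dist_triangle
      rw [SimpleGraph.dist_comm (u := F x) (v := anc G v j (F y))] at ht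
      omega
    have ge1 : G.dist x y ≤ G.dist (F x) (F y) := by
      have hk1' : j' ≤ G.dist u x := by omega
      have hk2' : j' ≤ G.dist u y := by omega
      have e2 : F (anc G u j' x) = F (anc G u j' y) := by
        rw [hFanc j' x hx hk1', hFanc j' y hy hk2', hanc']
      have ha : anc G u j' x = anc G u j' y := by
        refine hF5 _ _ ?_ ?_ e2
        · rw [anc_level htree hk1']; omega
        · rw [anc_level htree hk2']; omega
      have d1 : G.dist (anc G u j' x) x ≤ G.dist u x - j' := anc_dist htree hk1'
      rw [ha] at d1
      have d2 : G.dist (anc G u j' y) y ≤ G.dist u y - j' := anc_dist htree hk2'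
      have ht : G.dist x y ≤ G.dist x (anc G u j' y) + G.dist (anc G u j' y) y :=
        hc.dist_triangle
      rw [SimpleGraph.dist_comm (u := x) (v := anc G u j' y)] at ht
      omega
    omega
  · intro x hx
    exact ballEquiv_color (hF3 x hx)

lemma step_lemma (htree : G.IsTree) {m : ℕ}
    (hP : ∀ x y : V, BallEquiv G φ m x y → BallEquiv G φ (m+1) x y)
    {u v : V} (h : BallEquiv G φ (m+1) u v) : BallEquiv G φ (m+2) u v := by
  have hall : ∀ k, ∃ F, GoodMap G φ m u v k F := by
    intro k
    induction k with
    | zero => exact good_zero htree h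
    | succ k ih => exact good_succ htree hP ih
  obtain ⟨F, hF⟩ := hall (m+2)
  exact good_final htree hF

end TCAux



/-- The factor complexity of a coloring of a regular tree is either bounded or strictly
increasing: if `b(n+1) = b(n)` for some `n`, then `b(m+1) = b(m)` for all `m ≥ n`. -/
theorem complexity_bounded_or_strictMono {V A : Type*} (G : SimpleGraph V) [G.LocallyFinite]
    (φ : V → A) [Finite A] (d : ℕ) (hd : 2 ≤ d)
    (htree : G.IsTree) (hreg : ∀ v : V, G.degree v = d)
    (hsurj : Function.Surjective φ)
    (hmono : Monotone (complexity G φ))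
    (n : ℕ) (h : complexity G φ (n + 1) = complexity G φ n) :
    ∀ m, n ≤ m → complexity G φ (m + 1) = complexity G φ m := by
  intro m hm
  classical
  have hc := htree.isConnected
  have hV : Nonempty V := hc.nonempty
  have hfin0 : Finite (Quot (BallEquiv G φ 0)) := by
    have hwd : ∀ a b : V, BallEquiv G φ 0 a b → φ a = φ b := fun a b hab =>
      (TCAux.ballEquiv_color hab).symm
    refine Finite.of_injective (Quot.lift φ hwd) ?_
    intro x y hxy
    obtain ⟨a, rfl⟩ := Quot.exists_rep x
    obtain ⟨b, rfl⟩ := Quot.exists_rep y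
    exact Quot.sound (TCAux.ballEquiv_zero_of_color hc hxy)
  have hpos : ∀ k, 0 < complexity G φ k := by
    intro k
    have h0 : 0 < complexity G φ 0 := by
      haveI := hfin0
      haveI : Nonempty (Quot (BallEquiv G φ 0)) := ⟨Quot.mk _ hV.some⟩
      exact Nat.card_pos
    exact lt_of_lt_of_le h0 (hmono (Nat.zero_le k))
  have hfin : ∀ k, Finite (Quot (BallEquiv G φ k)) := by
    intro k
    refine Nat.finite_of_card_ne_zero ?_
    have := hpos k
    unfold complexity at this
    omega
  have base : ∀ x y : V, BallEquiv G φ n x y → BallEquiv G φ (n+1) x y := by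
    intro x y hxy
    haveI := hfin (n+1)
    let ρ : Quot (BallEquiv G φ (n+1)) → Quot (BallEquiv G φ n) :=
      Quot.map id (fun a b hab => TCAux.ballEquiv_mono (Nat.le_succ n) hab)
    have hsurj' : Function.Surjective ρ := by
      intro q
      obtain ⟨a, rfl⟩ := Quot.exists_rep q
      exact ⟨Quot.mk _ a, rfl⟩
    have hcard : Nat.card (Quot (BallEquiv G φ (n+1))) = Nat.card (Quot (BallEquiv G φ n)) := by
      unfold complexity at h
      exact h
    have hbij : Function.Bijective ρ :=
      (Nat.bijective_iff_surjective_and_card ρ).2 ⟨hsurj', hcard⟩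
    have hq : Quot.mk (BallEquiv G φ (n+1)) x = Quot.mk (BallEquiv G φ (n+1)) y := by
      apply hbij.1
      show Quot.mk (BallEquiv G φ n) x = Quot.mk (BallEquiv G φ n) y
      exact Quot.sound hxy
    exact ((TCAux.ballEquiv_equivalence hc (n+1)).eqvGen_iff).1 (Quot.eqvGen_exact hq)
  have P : ∀ k, n ≤ k → ∀ x y : V, BallEquiv G φ k x y → BallEquiv G φ (k+1) x y := by
    intro k hk
    induction k, hk using Nat.le_induction with
    | base => exact base
    | succ k hk ih =>
      intro x y hxy
      exact TCAux.step_lemma htree ih hxy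
  have Pm := P m hm
  let ρ : Quot (BallEquiv G φ (m+1)) → Quot (BallEquiv G φ m) :=
    Quot.map id (fun a b hab => TCAux.ballEquiv_mono (Nat.le_succ m) hab)
  have hsurj' : Function.Surjective ρ := by
    intro q
    obtain ⟨a, rfl⟩ := Quot.exists_rep q
    exact ⟨Quot.mk _ a, rfl⟩
  have hinj' : Function.Injective ρ := by
    intro q q' hqq
    obtain ⟨a, rfl⟩ := Quot.exists_rep q
    obtain ⟨b, rfl⟩ := Quot.exists_rep q'
    have h1 : Quot.mk (BallEquiv G φ m) a = Quot.mk (BallEquiv G φ m) b := hqq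
    have hab : BallEquiv G φ m a b :=
      ((TCAux.ballEquiv_equivalence hc m).eqvGen_iff).1 (Quot.eqvGen_exact h1)
    exact Quot.sound (Pm a b hab)
  have hcard := Nat.card_eq_of_bijective ρ ⟨hinj', hsurj'⟩
  unfold complexity
  exact hcard
end

section
/- Let (T, φ) be a quasi-Sturmian coloring and n > N₀. Suppose D is a colored n-ball distinct from A_n, B_n and S_n that is weakly adjacent to S_n. Then S_n and D are strongly adjacent. -/
open SimpleGraph

variable {V A : Type*}

section Aux

variable {V A : Type*} {G : SimpleGraph V} {φ : V → A}

lemma ballEquiv_refl (n : ℕ) (u : V) : BallEquiv G φ n u u :=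
  ⟨id, rfl, fun _ _ _ _ => rfl, fun _ _ => rfl, fun z hz => ⟨z, hz, rfl⟩⟩

lemma ballEquiv_trans {n : ℕ} {u v w : V} (h1 : BallEquiv G φ n u v)
    (h2 : BallEquiv G φ n v w) : BallEquiv G φ n u w := by
  obtain ⟨f, hfu, hfd, hfc, hfs⟩ := h1
  obtain ⟨g, hgu, hgd, hgc, hgs⟩ := h2
  have key : ∀ x : V, G.dist u x ≤ n → G.dist v (f x) ≤ n := by
    intro x hx
    have h0 : G.dist u u ≤ n := by rw [SimpleGraph.dist_self]; omega
    have := hfd u x h0 hx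
    rw [hfu] at this
    simpa [this] using hx
  refine ⟨g ∘ f, by simp [hfu, hgu], ?_, ?_, ?_⟩
  · intro x y hx hy
    simp only [Function.comp]
    rw [hgd _ _ (key x hx) (key y hy), hfd _ _ hx hy]
  · intro x hx
    simp only [Function.comp]
    rw [hgc _ (key x hx), hfc _ hx]
  · intro z hz
    obtain ⟨y, hy, hgy⟩ := hgs z hz
    obtain ⟨x, hx, hfx⟩ := hfs y hy
    exact ⟨x, hx, by simp [Function.comp, hfx, hgy]⟩

lemma ballEquiv_symm (hconn : G.Connected) {n : ℕ} {u v : V} (h : BallEquiv G φ n u v) :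
    BallEquiv G φ n v u := by
  classical
  obtain ⟨f, hfu, hfd, hfc, hfs⟩ := h
  have hinj : ∀ x y : V, G.dist u x ≤ n → G.dist u y ≤ n → f x = f y → x = y := by
    intro x y hx hy hxy
    have := hfd x y hx hy
    rw [hxy, SimpleGraph.dist_self] at this
    exact (hconn.dist_eq_zero_iff.mp this.symm)
  set g : V → V := fun z => if h : ∃ x, G.dist u x ≤ n ∧ f x = z then h.choose else u with hg
  have hgspec : ∀ z : V, G.dist v z ≤ n → G.dist u (g z) ≤ n ∧ f (g z) = z := by
    intro z hz
    have hex := hfs z hz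
    simp only [hg, dif_pos hex]
    exact hex.choose_spec
  have hdist : ∀ z : V, G.dist v z ≤ n → G.dist u (g z) = G.dist v z := by
    intro z hz
    obtain ⟨h1, h2⟩ := hgspec z hz
    have h0 : G.dist u u ≤ n := by rw [SimpleGraph.dist_self]; omega
    have := hfd u (g z) h0 h1
    rw [hfu, h2] at this
    exact this.symm
  refine ⟨g, ?_, ?_, ?_, ?_⟩
  · have hv : G.dist v v ≤ n := by rw [SimpleGraph.dist_self]; omega
    obtain ⟨h1, h2⟩ := hgspec v hv
    have := hdist v hv
    rw [SimpleGraph.dist_self] at this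
    exact (hconn.dist_eq_zero_iff.mp this).symm
  · intro x y hx hy
    obtain ⟨hx1, hx2⟩ := hgspec x hx
    obtain ⟨hy1, hy2⟩ := hgspec y hy
    have := hfd _ _ hx1 hy1
    rw [hx2, hy2] at this
    exact this.symm
  · intro x hx
    obtain ⟨hx1, hx2⟩ := hgspec x hx
    have := hfc _ hx1
    rw [hx2] at this
    exact this.symm
  · intro z hz
    refine ⟨f z, ?_, ?_⟩
    · have h0 : G.dist u u ≤ n := by rw [SimpleGraph.dist_self]; omega
      have := hfd u z h0 hz
      rw [hfu] at this
      simpa [this] using hz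
    · have hfz : G.dist v (f z) ≤ n := by
        have h0 : G.dist u u ≤ n := by rw [SimpleGraph.dist_self]; omega
        have := hfd u z h0 hz
        rw [hfu] at this
        simpa [this] using hz
      obtain ⟨h1, h2⟩ := hgspec (f z) hfz
      exact hinj _ _ h1 hz h2

lemma ballEquiv_mono {m n : ℕ} (hmn : m ≤ n) {u v : V} (h : BallEquiv G φ n u v) :
    BallEquiv G φ m u v := by
  obtain ⟨f, hfu, hfd, hfc, hfs⟩ := h
  refine ⟨f, hfu, fun x y hx hy => hfd x y (hx.trans hmn) (hy.trans hmn),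
    fun x hx => hfc x (hx.trans hmn), ?_⟩
  intro z hz
  obtain ⟨x, hx, hfx⟩ := hfs z (hz.trans hmn)
  refine ⟨x, ?_, hfx⟩
  have h0 : G.dist u u ≤ n := by rw [SimpleGraph.dist_self]; omega
  have := hfd u x h0 hx
  rw [hfu, hfx] at this
  omega

lemma ballEquiv_shift (hconn : G.Connected) {n : ℕ} (hn : 1 ≤ n) {u v w : V}
    (h : BallEquiv G φ n u v) (hadj : G.Adj u w) :
    ∃ w', G.Adj v w' ∧ BallEquiv G φ (n - 1) w w' := by
  obtain ⟨f, hfu, hfd, hfc, hfs⟩ := h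
  have hduw : G.dist u w = 1 := (SimpleGraph.dist_eq_one_iff_adj).mpr hadj
  have hw : G.dist u w ≤ n := by omega
  have h0 : G.dist u u ≤ n := by rw [SimpleGraph.dist_self]; omega
  have hdvw : G.dist v (f w) = 1 := by
    have := hfd u w h0 hw
    rw [hfu] at this
    omega
  have hball : ∀ x : V, G.dist w x ≤ n - 1 → G.dist u x ≤ n := by
    intro x hx
    have := hconn.dist_triangle (u := u) (v := w) (w := x)
    omega
  refine ⟨f w, (SimpleGraph.dist_eq_one_iff_adj).mp hdvw, f, rfl, ?_, ?_, ?_⟩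
  · intro x y hx hy
    exact hfd x y (hball x hx) (hball y hy)
  · intro x hx
    exact hfc x (hball x hx)
  · intro z hz
    have hvz : G.dist v z ≤ n := by
      have := hconn.dist_triangle (u := v) (v := f w) (w := z)
      omega
    obtain ⟨x, hx, hfx⟩ := hfs z hvz
    refine ⟨x, ?_, hfx⟩
    have := hfd w x hw hx
    rw [hfx] at this
    omega

lemma fiber_unique {α β : Type*} [Fintype α] [Fintype β] [DecidableEq α] [DecidableEq β]
    (f : α → β) (hf : Function.Surjective f)
    (hcard : Fintype.card α ≤ Fintype.card β + 1)
    (a b : α) (hne : a ≠ b) (hfab : f a = f b) :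
    ∀ x y : α, f x = f y → f x ≠ f a → x = y := by
  intro x y hfxy hfxa
  by_contra hxy
  have hcard_eq : Fintype.card α = ∑ q : β, Fintype.card {z : α // f z = q} := by
    rw [← Fintype.card_sigma]
    exact Fintype.card_congr (Equiv.sigmaFiberEquiv f).symm
  have h1 : ∀ q : β, 1 ≤ Fintype.card {z : α // f z = q} := by
    intro q
    obtain ⟨z, hz⟩ := hf q
    exact Fintype.card_pos_iff.mpr ⟨⟨z, hz⟩⟩
  have hP : 2 ≤ Fintype.card {z : α // f z = f a} :=
    Fintype.one_lt_card_iff_nontrivial.mpr ⟨⟨a, rfl⟩, ⟨b, hfab.symm⟩, by simp [hne]⟩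
  have hQ : 2 ≤ Fintype.card {z : α // f z = f x} :=
    Fintype.one_lt_card_iff_nontrivial.mpr ⟨⟨x, rfl⟩, ⟨y, hfxy.symm⟩, by simp [hxy]⟩
  set c : β → ℕ := fun q => Fintype.card {z : α // f z = q} with hc
  have hsplit : ∑ q : β, c q = c (f a) + c (f x) + ∑ q ∈ (Finset.univ \ {f a, f x}), c q := by
    rw [← Finset.sum_sdiff (Finset.subset_univ {f a, f x})]
    rw [Finset.sum_pair (Ne.symm hfxa)]
    ring
  have hrest : (Finset.univ \ ({f a, f x} : Finset β)).card ≤ ∑ q ∈ (Finset.univ \ {f a, f x}), c q := by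
    calc (Finset.univ \ ({f a, f x} : Finset β)).card
        = ∑ _q ∈ (Finset.univ \ ({f a, f x} : Finset β)), 1 := by simp
      _ ≤ ∑ q ∈ (Finset.univ \ {f a, f x}), c q := Finset.sum_le_sum (fun q _ => h1 q)
  have hcard2 : (Finset.univ \ ({f a, f x} : Finset β)).card = Fintype.card β - 2 := by
    rw [Finset.card_sdiff_of_subset (Finset.subset_univ _), Finset.card_pair (Ne.symm hfxa),
      Finset.card_univ]
  have hβ2 : 2 ≤ Fintype.card β := by
    have : ({f a, f x} : Finset β).card = 2 := Finset.card_pair (Ne.symm hfxa)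
    have := Finset.card_le_univ ({f a, f x} : Finset β)
    omega
  have hca : c (f a) = Fintype.card {z : α // f z = f a} := rfl
  have hcx : c (f x) = Fintype.card {z : α // f z = f x} := rfl
  have hsum : Fintype.card α = ∑ q : β, c q := hcard_eq
  omega

end Aux

/-- For a quasi-Sturmian coloring and `n > N₀`: if a colored `n`-ball `D` distinct from
`A_n`, `B_n`, `S_n` is weakly adjacent to the special ball `S_n`, then `S_n` and `D` are
strongly adjacent. -/
theorem special_strongly_adjacent {V A : Type*} (G : SimpleGraph V) [G.LocallyFinite]
    (φ : V → A) [Finite A] (dg : ℕ) (hd : 2 ≤ dg)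
    (htree : G.IsTree) (hreg : ∀ v : V, G.degree v = dg)
    (hsurj : Function.Surjective φ)
    (N₀ c : ℕ) (hQS : ∀ m, N₀ ≤ m → complexity G φ m = m + c)
    (n : ℕ) (hn : N₀ < n)
    -- `s` represents the unique special ball `S_n`
    (s : V) (hs : IsSpecialCenter G φ n s)
    (hsu : ∀ x : V, IsSpecialCenter G φ n x → BallEquiv G φ n s x)
    -- `s'` represents the special ball `S_{n-1}`, with `a`, `b` its two extensions `A_n`, `B_n`
    (s' : V) (hs' : IsSpecialCenter G φ (n - 1) s')
    (a b : V) (ha : BallEquiv G φ (n - 1) a s') (hb : BallEquiv G φ (n - 1) b s')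
    (hab : ¬ BallEquiv G φ n a b)
    (honly : ∀ x : V, BallEquiv G φ (n - 1) x s' → BallEquiv G φ n x a ∨ BallEquiv G φ n x b)
    -- `D`, represented by `e`, is distinct from `A_n`, `B_n`, `S_n` and weakly adjacent to `S_n`
    (e : V) (hea : ¬ BallEquiv G φ n e a) (heb : ¬ BallEquiv G φ n e b)
    (hes : ¬ BallEquiv G φ n e s)
    (hweak : WeakAdj G φ n e s) :
    StrongAdj G φ n s e ∧ StrongAdj G φ n e s := by
  
  classical
  have hconn : G.Connected := htree.isConnected
  have hn1 : 1 ≤ n := by omega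
  have hequiv : ∀ m : ℕ, Equivalence (BallEquiv G φ m) := fun m =>
    ⟨fun u => ballEquiv_refl m u, fun h => ballEquiv_symm hconn h, fun h1 h2 => ballEquiv_trans h1 h2⟩
  obtain ⟨v, w, hvw, hev, hsw⟩ := hweak
  have hens' : ¬ BallEquiv G φ (n - 1) e s' := fun h => (honly e h).elim hea heb
  have hcn : Nat.card (Quot (BallEquiv G φ n)) = n + c := hQS n (le_of_lt hn)
  have hcn1 : Nat.card (Quot (BallEquiv G φ (n - 1))) = (n - 1) + c := hQS (n - 1) (by omega)
  haveI hfin_n : Finite (Quot (BallEquiv G φ n)) := Nat.finite_of_card_ne_zero (by omega)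
  let π : Quot (BallEquiv G φ n) → Quot (BallEquiv G φ (n - 1)) :=
    Quot.lift (fun x => Quot.mk _ x) (fun x y h => Quot.sound (ballEquiv_mono (by omega) h))
  have hπ : Function.Surjective π := by
    intro q
    induction q using Quot.ind with
    | _ x => exact ⟨Quot.mk _ x, rfl⟩
  haveI hfin_n1 : Finite (Quot (BallEquiv G φ (n - 1))) := Finite.of_surjective π hπ
  have hmk : ∀ (m : ℕ) (x y : V),
      (Quot.mk (BallEquiv G φ m) x = Quot.mk (BallEquiv G φ m) y) ↔ BallEquiv G φ m x y :=
    fun m x y => ⟨fun h => ((hequiv m).eqvGen_iff).mp (Quot.eqvGen_exact h),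
      fun h => Quot.sound h⟩
  obtain ⟨_⟩ := nonempty_fintype (Quot (BallEquiv G φ n))
  obtain ⟨_⟩ := nonempty_fintype (Quot (BallEquiv G φ (n - 1)))
  have hcard : Fintype.card (Quot (BallEquiv G φ n)) ≤
      Fintype.card (Quot (BallEquiv G φ (n - 1))) + 1 := by
    rw [← Nat.card_eq_fintype_card, ← Nat.card_eq_fintype_card, hcn, hcn1]; omega
  have key : ∀ x y : V, BallEquiv G φ (n - 1) x y → ¬ BallEquiv G φ (n - 1) x s' →
      BallEquiv G φ n x y := by
    intro x y hxy hxs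
    have hπab : π (Quot.mk _ a) = π (Quot.mk _ b) :=
      (hmk (n - 1) a b).mpr (ballEquiv_trans ha (ballEquiv_symm hconn hb))
    have hne : (Quot.mk (BallEquiv G φ n) a) ≠ Quot.mk (BallEquiv G φ n) b :=
      fun h => hab ((hmk n a b).mp h)
    have hπxy : π (Quot.mk _ x) = π (Quot.mk _ y) := (hmk (n - 1) x y).mpr hxy
    have hπxa : π (Quot.mk _ x) ≠ π (Quot.mk _ a) := by
      intro h
      exact hxs (ballEquiv_trans ((hmk (n - 1) x a).mp h) ha)
    have := fiber_unique π hπ hcard (Quot.mk _ a) (Quot.mk _ b) hne hπab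
      (Quot.mk _ x) (Quot.mk _ y) hπxy hπxa
    exact (hmk n x y).mp this
  constructor
  · intro x hsx
    have hwx : BallEquiv G φ n w x := ballEquiv_trans (ballEquiv_symm hconn hsw) hsx
    obtain ⟨v', hadj, hvv'⟩ := ballEquiv_shift hconn hn1 hwx hvw.symm
    have hev' : BallEquiv G φ (n - 1) e v' :=
      ballEquiv_trans (ballEquiv_mono (by omega) hev) hvv'
    exact ⟨v', hadj, key e v' hev' hens'⟩
  · intro x hex
    have hvspec : ¬ IsSpecialCenter G φ n v := by
      intro h
      exact hes (ballEquiv_trans hev (ballEquiv_symm hconn (hsu v h)))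
    have hvx : BallEquiv G φ n v x := ballEquiv_trans (ballEquiv_symm hconn hev) hex
    have hvx1 : BallEquiv G φ (n + 1) v x := by
      by_contra hcon
      exact hvspec ⟨x, hvx, hcon⟩
    obtain ⟨w', hadj, hww'⟩ := ballEquiv_shift hconn (by omega) hvx1 hvw
    have hww2 : BallEquiv G φ n w w' := by simpa using hww'
    exact ⟨w', hadj, ballEquiv_trans hsw hww2⟩
end
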